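/- Let Ω ∈ ℝ with 0 < Ω² < 1 and Ω² ≠ 1/3. Suppose v : ℕ → ℝ satisfies v(0) = 0 and the recurrence (3Ω² − 1)·(m·v(m) + (m+3)·v(m+2)) + (1+Ω²)·(2m+3)·v(m+1) = 0 for every m ∈ ℕ. Then for every m ∈ ℕ: v(m+1) = [(1+Ω²)²·v(1)/(4·√π·Ω²·(1−Ω²))] · [Γ(3/2)·Γ(m+3/2)/(Γ(m/2+3/2)·Γ(m/2+2))] · ((1+Ω²)/(1−3Ω²))^m · Σ_{k=0}^{m+2} [(−m/2−1/2)_k · (−m/2−1)_k / ((−m−1/2)_k · k!)] · ((1−3Ω²)²/(1+Ω²)²)^k, where the finite sum is the terminating Gauss hypergeometric series ₂F₁(−m/2−1/2, −m/2−1; −m−1/2; (1−3Ω²)²/(1+Ω²)²). -/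

import Mathlib

noncomputable def gg19 (m : ℕ) : ℝ :=
  Real.Gamma (3 / 2) * Real.Gamma ((m : ℝ) + 3 / 2)
    / (Real.Gamma ((m : ℝ) / 2 + 3 / 2) * Real.Gamma ((m : ℝ) / 2 + 2))

noncomputable def cc19 (m k : ℕ) : ℝ :=
  (∏ j ∈ Finset.range k, (-(m : ℝ) / 2 - 1 / 2 + (j : ℝ)))
    * (∏ j ∈ Finset.range k, (-(m : ℝ) / 2 - 1 + (j : ℝ)))
    / ((∏ j ∈ Finset.range k, (-(m : ℝ) - 1 / 2 + (j : ℝ)))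
        * (Nat.factorial k : ℝ))

lemma gg19_def (m : ℕ) : gg19 m =
    Real.Gamma (3 / 2) * Real.Gamma ((m : ℝ) + 3 / 2)
      / (Real.Gamma ((m : ℝ) / 2 + 3 / 2) * Real.Gamma ((m : ℝ) / 2 + 2)) := rfl

lemma cc19_def (m k : ℕ) : cc19 m k =
    (∏ j ∈ Finset.range k, (-(m : ℝ) / 2 - 1 / 2 + (j : ℝ)))
      * (∏ j ∈ Finset.range k, (-(m : ℝ) / 2 - 1 + (j : ℝ)))
      / ((∏ j ∈ Finset.range k, (-(m : ℝ) - 1 / 2 + (j : ℝ)))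
          * (Nat.factorial k : ℝ)) := rfl

lemma gg19_pos (m : ℕ) : 0 < gg19 m := by
  unfold gg19
  have h1 := Real.Gamma_pos_of_pos (show (0:ℝ) < 3/2 by norm_num)
  have h2 := Real.Gamma_pos_of_pos (show (0:ℝ) < (m:ℝ) + 3/2 by positivity)
  have h3 := Real.Gamma_pos_of_pos (show (0:ℝ) < (m:ℝ)/2 + 3/2 by positivity)
  have h4 := Real.Gamma_pos_of_pos (show (0:ℝ) < (m:ℝ)/2 + 2 by positivity)
  positivity

lemma gg19_succ (m : ℕ) : ((m:ℝ) + 3) * gg19 (m+1) = (2*(m:ℝ)+3) * gg19 m := by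
  unfold gg19
  have e1 : ((m+1:ℕ):ℝ) + 3/2 = ((m:ℝ) + 3/2) + 1 := by push_cast; ring
  have e2 : ((m+1:ℕ):ℝ)/2 + 3/2 = (m:ℝ)/2 + 2 := by push_cast; ring
  have e3 : ((m+1:ℕ):ℝ)/2 + 2 = ((m:ℝ)/2 + 3/2) + 1 := by push_cast; ring
  rw [e1, e2, e3, Real.Gamma_add_one (by positivity),
    Real.Gamma_add_one (by positivity)]
  have g3 := Real.Gamma_pos_of_pos (show (0:ℝ) < (m:ℝ)/2 + 3/2 by positivity)
  have g4 := Real.Gamma_pos_of_pos (show (0:ℝ) < (m:ℝ)/2 + 2 by positivity)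
  field_simp

lemma prod_ext19 (x y : ℝ) (K : ℕ) (h : x = y) :
    ∏ j ∈ Finset.range K, (x + (j:ℝ)) = ∏ j ∈ Finset.range K, (y + (j:ℝ)) := by rw [h]

lemma prod_shift19 (x : ℝ) (K : ℕ) :
    ∏ j ∈ Finset.range (K+1), (x + (j:ℝ)) = x * ∏ j ∈ Finset.range K, (x + 1 + (j:ℝ)) := by
  rw [Finset.prod_range_succ', mul_comm]
  congr 1
  · norm_num
  · exact Finset.prod_congr rfl fun j _ => by push_cast; ring

set_option maxHeartbeats 1000000 in
lemma cc19_rec (n K : ℕ) :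
    (2*(n:ℝ)+3) * (2*(n:ℝ)+5) * cc19 (n+2) (K+1) + ((n:ℝ)+1) * ((n:ℝ)+3) * cc19 n K
      = (2*(n:ℝ)+3) * (2*(n:ℝ)+5) * cc19 (n+1) (K+1) := by
  unfold cc19
  set A := ∏ j ∈ Finset.range K, (-(n : ℝ)/2 - 1/2 + (j:ℝ)) with hA
  set B := ∏ j ∈ Finset.range K, (-(n : ℝ)/2 - 1 + (j:ℝ)) with hB
  set C := ∏ j ∈ Finset.range K, (-(n : ℝ) - 1/2 + (j:ℝ)) with hC
  set D := ∏ j ∈ Finset.range K, (-(n : ℝ) - 3/2 + (j:ℝ)) with hD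
  have hP12 : ∏ j ∈ Finset.range (K+1), (-((n+2 : ℕ) : ℝ)/2 - 1/2 + (j:ℝ))
      = (-(n:ℝ)/2 - 3/2) * A := by
    rw [prod_ext19 _ (-(n:ℝ)/2 - 3/2) _ (by push_cast; ring), prod_shift19,
      prod_ext19 (-(n:ℝ)/2 - 3/2 + 1) (-(n:ℝ)/2 - 1/2) K (by ring)]
  have hP22 : ∏ j ∈ Finset.range (K+1), (-((n+2 : ℕ) : ℝ)/2 - 1 + (j:ℝ))
      = (-(n:ℝ)/2 - 2) * B := by
    rw [prod_ext19 _ (-(n:ℝ)/2 - 2) _ (by push_cast; ring), prod_shift19,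
      prod_ext19 (-(n:ℝ)/2 - 2 + 1) (-(n:ℝ)/2 - 1) K (by ring)]
  have hQ2 : ∏ j ∈ Finset.range (K+1), (-((n+2 : ℕ) : ℝ) - 1/2 + (j:ℝ))
      = (-(n:ℝ) - 5/2) * D := by
    rw [prod_ext19 _ (-(n:ℝ) - 5/2) _ (by push_cast; ring), prod_shift19,
      prod_ext19 (-(n:ℝ) - 5/2 + 1) (-(n:ℝ) - 3/2) K (by ring)]
  have hP11 : ∏ j ∈ Finset.range (K+1), (-((n+1 : ℕ) : ℝ)/2 - 1/2 + (j:ℝ))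
      = B * (-(n:ℝ)/2 - 1 + (K:ℝ)) := by
    rw [prod_ext19 _ (-(n:ℝ)/2 - 1) _ (by push_cast; ring)]
    exact Finset.prod_range_succ _ _
  have hP21 : ∏ j ∈ Finset.range (K+1), (-((n+1 : ℕ) : ℝ)/2 - 1 + (j:ℝ))
      = (-(n:ℝ)/2 - 3/2) * A := by
    rw [prod_ext19 _ (-(n:ℝ)/2 - 3/2) _ (by push_cast; ring), prod_shift19,
      prod_ext19 (-(n:ℝ)/2 - 3/2 + 1) (-(n:ℝ)/2 - 1/2) K (by ring)]
  have hQ1 : ∏ j ∈ Finset.range (K+1), (-((n+1 : ℕ) : ℝ) - 1/2 + (j:ℝ))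
      = (-(n:ℝ) - 3/2) * C := by
    rw [prod_ext19 _ (-(n:ℝ) - 3/2) _ (by push_cast; ring), prod_shift19,
      prod_ext19 (-(n:ℝ) - 3/2 + 1) (-(n:ℝ) - 1/2) K (by ring)]
  have hDC : D * (-(n:ℝ) - 3/2 + (K:ℝ)) = (-(n:ℝ) - 3/2) * C := by
    have h1 : ∏ j ∈ Finset.range (K+1), (-(n:ℝ) - 3/2 + (j:ℝ))
        = D * (-(n:ℝ) - 3/2 + (K:ℝ)) := Finset.prod_range_succ _ _
    have h2 : ∏ j ∈ Finset.range (K+1), (-(n:ℝ) - 3/2 + (j:ℝ))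
        = (-(n:ℝ) - 3/2) * C := by
      rw [prod_shift19, prod_ext19 (-(n:ℝ) - 3/2 + 1) (-(n:ℝ) - 1/2) K (by ring)]
    rw [← h1, h2]
  have hCne : C ≠ 0 := by
    rw [hC]
    apply Finset.prod_ne_zero_iff.mpr
    intro j hj h
    have h2 : ((2*j : ℕ) : ℝ) = ((2*n+1 : ℕ) : ℝ) := by push_cast; linarith
    have := Nat.cast_injective h2
    omega
  have hDKne : (-(n:ℝ) - 3/2 + (K:ℝ)) ≠ 0 := by
    intro h
    have h2 : ((2*K : ℕ) : ℝ) = ((2*n+3 : ℕ) : ℝ) := by push_cast; linarith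
    have := Nat.cast_injective h2
    omega
  have hDne : D ≠ 0 := by
    intro h
    rw [h, zero_mul] at hDC
    have h32 : (-(n:ℝ) - 3/2) ≠ 0 := by
      intro h'; have : (0:ℝ) ≤ (n:ℝ) := Nat.cast_nonneg n; linarith
    exact hCne (by
      rcases mul_eq_zero.mp hDC.symm with h' | h'
      · exact absurd h' h32
      · exact h')
  have hfac : (Nat.factorial K : ℝ) ≠ 0 := Nat.cast_ne_zero.mpr (Nat.factorial_ne_zero K)
  have h52 : (-(n:ℝ) - 5/2) ≠ 0 := by
    intro h'; have : (0:ℝ) ≤ (n:ℝ) := Nat.cast_nonneg n; linarith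
  have h32 : (-(n:ℝ) - 3/2) ≠ 0 := by
    intro h'; have : (0:ℝ) ≤ (n:ℝ) := Nat.cast_nonneg n; linarith
  have hK1 : ((K:ℝ) + 1) ≠ 0 := by positivity
  have hCval : C = D * (-(n:ℝ) - 3/2 + (K:ℝ)) / (-(n:ℝ) - 3/2) := by
    rw [eq_div_iff h32]; linarith [hDC]
  rw [hP12, hP22, hQ2, hP11, hP21, hQ1, Nat.factorial_succ]
  push_cast
  simp only [← mul_div_assoc]
  have hd1 : (-(n:ℝ) - 5/2) * D * (((K:ℝ) + 1) * (Nat.factorial K : ℝ)) ≠ 0 :=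
    mul_ne_zero (mul_ne_zero h52 hDne) (mul_ne_zero hK1 hfac)
  have hd2 : C * (Nat.factorial K : ℝ) ≠ 0 := mul_ne_zero hCne hfac
  have hd3 : (-(n:ℝ) - 3/2) * C * (((K:ℝ) + 1) * (Nat.factorial K : ℝ)) ≠ 0 :=
    mul_ne_zero (mul_ne_zero h32 hCne) (mul_ne_zero hK1 hfac)
  rw [div_add_div _ _ hd1 hd2, div_eq_div_iff (mul_ne_zero hd1 hd2) hd3]
  linear_combination (-(A * B * ((Nat.factorial K : ℝ))^2 * ((K:ℝ)+1) * C
    * (2*(n:ℝ)+3) * (2*(n:ℝ)+5) * ((n:ℝ)+3) * ((n:ℝ)+4)) / 4) * hDC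

lemma cc19_zero (m : ℕ) : cc19 m 0 = 1 := by simp [cc19]

lemma cc19_eq_zero (m k : ℕ) (h : m + 2 ≤ k) : cc19 m k = 0 := by
  unfold cc19
  rcases Nat.even_or_odd m with ⟨a, ha⟩ | ⟨a, ha⟩
  · have : (∏ j ∈ Finset.range k, (-(m : ℝ) / 2 - 1 + (j : ℝ))) = 0 :=
      Finset.prod_eq_zero (Finset.mem_range.mpr (show a+1 < k by omega))
        (by subst ha; push_cast; ring)
    rw [this]; simp
  · have : (∏ j ∈ Finset.range k, (-(m : ℝ) / 2 - 1 / 2 + (j : ℝ))) = 0 :=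
      Finset.prod_eq_zero (Finset.mem_range.mpr (show a+1 < k by omega))
        (by subst ha; push_cast; ring)
    rw [this]; simp

lemma sum_rec19 (z : ℝ) (n : ℕ) :
    (2*(n:ℝ)+3) * (2*(n:ℝ)+5) * (∑ k ∈ Finset.range (n+5), cc19 (n+2) k * z^k)
      + ((n:ℝ)+1) * ((n:ℝ)+3) * z * (∑ k ∈ Finset.range (n+3), cc19 n k * z^k)
      = (2*(n:ℝ)+3) * (2*(n:ℝ)+5) * (∑ k ∈ Finset.range (n+4), cc19 (n+1) k * z^k) := by
  have e1 : ∑ k ∈ Finset.range (n+4), cc19 (n+1) k * z^k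
      = ∑ k ∈ Finset.range (n+5), cc19 (n+1) k * z^k := by
    rw [show n+5 = (n+4)+1 from rfl,
      Finset.sum_range_succ (fun k => cc19 (n+1) k * z^k) (n+4),
      cc19_eq_zero (n+1) (n+4) (by omega)]
    ring
  have e0 : ∑ k ∈ Finset.range (n+3), cc19 n k * z^k
      = ∑ k ∈ Finset.range (n+4), cc19 n k * z^k := by
    rw [show n+4 = (n+3)+1 from rfl,
      Finset.sum_range_succ (fun k => cc19 n k * z^k) (n+3),
      cc19_eq_zero n (n+3) (by omega)]
    ring
  rw [e1, e0]
  rw [show n+5 = (n+4)+1 from rfl,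
    Finset.sum_range_succ' (fun k => cc19 (n+2) k * z^k) (n+4),
    Finset.sum_range_succ' (fun k => cc19 (n+1) k * z^k) (n+4)]
  have key : ∀ k ∈ Finset.range (n+4),
      (2*(n:ℝ)+3) * (2*(n:ℝ)+5) * (cc19 (n+2) (k+1) * z^(k+1))
        + ((n:ℝ)+1) * ((n:ℝ)+3) * z * (cc19 n k * z^k)
      = (2*(n:ℝ)+3) * (2*(n:ℝ)+5) * (cc19 (n+1) (k+1) * z^(k+1)) := by
    intro k _
    linear_combination (z^(k+1)) * cc19_rec n k
  have hsum : (2*(n:ℝ)+3) * (2*(n:ℝ)+5)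
        * (∑ k ∈ Finset.range (n+4), cc19 (n+2) (k+1) * z^(k+1))
      + ((n:ℝ)+1) * ((n:ℝ)+3) * z * (∑ k ∈ Finset.range (n+4), cc19 n k * z^k)
      = (2*(n:ℝ)+3) * (2*(n:ℝ)+5)
        * (∑ k ∈ Finset.range (n+4), cc19 (n+1) (k+1) * z^(k+1)) := by
    rw [Finset.mul_sum, Finset.mul_sum, Finset.mul_sum, ← Finset.sum_add_distrib]
    exact Finset.sum_congr rfl key
  simp only [cc19_zero]
  linear_combination hsum

theorem statement19 (Ω : ℝ) (h1 : 0 < Ω ^ 2) (h2 : Ω ^ 2 < 1) (h3 : Ω ^ 2 ≠ 1 / 3)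
    (v : ℕ → ℝ) (hv0 : v 0 = 0)
    (hrec : ∀ m : ℕ,
      (3 * Ω ^ 2 - 1) * ((m : ℝ) * v m + ((m : ℝ) + 3) * v (m + 2))
        + (1 + Ω ^ 2) * (2 * (m : ℝ) + 3) * v (m + 1) = 0) :
    ∀ m : ℕ,
      v (m + 1) =
        ((1 + Ω ^ 2) ^ 2 * v 1 / (4 * Real.sqrt Real.pi * Ω ^ 2 * (1 - Ω ^ 2)))
        * (Real.Gamma (3 / 2) * Real.Gamma ((m : ℝ) + 3 / 2)
            / (Real.Gamma ((m : ℝ) / 2 + 3 / 2) * Real.Gamma ((m : ℝ) / 2 + 2)))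
        * ((1 + Ω ^ 2) / (1 - 3 * Ω ^ 2)) ^ m
        * ∑ k ∈ Finset.range (m + 3),
            ((∏ j ∈ Finset.range k, (-(m : ℝ) / 2 - 1 / 2 + (j : ℝ)))
              * (∏ j ∈ Finset.range k, (-(m : ℝ) / 2 - 1 + (j : ℝ)))
              / ((∏ j ∈ Finset.range k, (-(m : ℝ) - 1 / 2 + (j : ℝ)))
                  * (Nat.factorial k : ℝ)))
            * ((1 - 3 * Ω ^ 2) ^ 2 / (1 + Ω ^ 2) ^ 2) ^ k := by
  have hπ : Real.sqrt Real.pi ≠ 0 := by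
    have := Real.pi_pos
    positivity
  have hΩ : Ω ^ 2 ≠ 0 := ne_of_gt h1
  have h1s : (1:ℝ) + Ω ^ 2 ≠ 0 := by positivity
  have h1ms : (1:ℝ) - Ω ^ 2 ≠ 0 := by
    intro h; rw [sub_eq_zero] at h; exact absurd h.symm (ne_of_lt h2)
  have h13 : (1:ℝ) - 3 * Ω ^ 2 ≠ 0 := by
    intro h; apply h3; linarith
  have hG32 : Real.Gamma (3/2) = Real.sqrt Real.pi / 2 := by
    rw [show (3/2 : ℝ) = 1/2 + 1 by norm_num, Real.Gamma_add_one (by norm_num),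
      Real.Gamma_one_half_eq]
    ring
  set t := (1 + Ω ^ 2) / (1 - 3 * Ω ^ 2) with ht
  set z := (1 - 3 * Ω ^ 2) ^ 2 / (1 + Ω ^ 2) ^ 2 with hz
  set pre := (1 + Ω ^ 2) ^ 2 * v 1 / (4 * Real.sqrt Real.pi * Ω ^ 2 * (1 - Ω ^ 2))
    with hpre
  suffices h : ∀ m : ℕ,
      v (m + 1) = pre * gg19 m * t ^ m * ∑ k ∈ Finset.range (m + 3), cc19 m k * z ^ k by
    intro m
    rw [h m, gg19_def]
    rfl
  have ht' : (1 - 3 * Ω ^ 2) * t = 1 + Ω ^ 2 := by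
    rw [ht]; field_simp
  have htz : t ^ 2 * z = 1 := by
    rw [ht, hz]; field_simp
    exact div_self (by intro h; apply h13; linarith)
  have hgg0 : gg19 0 = Real.sqrt Real.pi / 2 := by
    rw [gg19_def]
    norm_num [Real.Gamma_two, hG32]
  have hgg1 : gg19 1 = Real.sqrt Real.pi / 2 := by
    have h := gg19_succ 0
    norm_num at h
    rw [h, hgg0]
  have c01 : cc19 0 1 = -1 := by
    rw [cc19_def]; norm_num [Finset.prod_range_one]
  have c02 : cc19 0 2 = 0 := cc19_eq_zero 0 2 (by norm_num)
  have c11 : cc19 1 1 = -1 := by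
    rw [cc19_def]; norm_num [Finset.prod_range_one]
  have c12 : cc19 1 2 = 0 := by
    rw [cc19_def]
    rw [show (2:ℕ) = 1 + 1 from rfl, Finset.prod_range_succ
      (fun j => (-((1:ℕ):ℝ)/2 - 1/2 + (j:ℝ))) 1]
    norm_num
  have c13 : cc19 1 3 = 0 := cc19_eq_zero 1 3 (by norm_num)
  have base0 : v 1 = pre * gg19 0 * t ^ 0 * ∑ k ∈ Finset.range 3, cc19 0 k * z ^ k := by
    rw [Finset.sum_range_succ, Finset.sum_range_succ, Finset.sum_range_one,
      cc19_zero, c01, c02, hgg0, hpre, hz]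
    have hΩ1 : Ω ≠ 0 := fun h => hΩ (by rw [h]; ring)
    field_simp
    ring
  have base1 : v 2 = pre * gg19 1 * t ^ 1 * ∑ k ∈ Finset.range 4, cc19 1 k * z ^ k := by
    have h := hrec 0
    push_cast at h
    have hv2 : v 2 = (1 + Ω ^ 2) * v 1 / (1 - 3 * Ω ^ 2) := by
      rw [eq_div_iff h13]; linear_combination -h/3
    rw [Finset.sum_range_succ, Finset.sum_range_succ, Finset.sum_range_succ,
      Finset.sum_range_one, cc19_zero, c11, c12, c13, hgg1, hv2, hpre, hz, ht]
    have hΩ1 : Ω ≠ 0 := fun h => hΩ (by rw [h]; ring)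
    field_simp
    ring
  have key : ∀ n : ℕ,
      (v (n + 1) = pre * gg19 n * t ^ n * ∑ k ∈ Finset.range (n + 3), cc19 n k * z ^ k)
      ∧ (v (n + 2) = pre * gg19 (n+1) * t ^ (n+1)
          * ∑ k ∈ Finset.range (n + 4), cc19 (n+1) k * z ^ k) := by
    intro n
    induction n with
    | zero => exact ⟨base0, base1⟩
    | succ n ih =>
      obtain ⟨ihn, ihn1⟩ := ih
      refine ⟨ihn1, ?_⟩
      show v (n + 3) = pre * gg19 (n+2) * t ^ (n+2)
          * ∑ k ∈ Finset.range (n + 5), cc19 (n+2) k * z ^ k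
      have h := hrec (n+1)
      push_cast at h
      have hv3 : ((n:ℝ) + 4) * v (n + 3)
          = (2*(n:ℝ)+5) * t * v (n + 2) - ((n:ℝ)+1) * v (n + 1) := by
        have hs : (1 - 3 * Ω ^ 2) * (((n:ℝ) + 4) * v (n + 3))
            = (1 - 3 * Ω ^ 2) * ((2*(n:ℝ)+5) * t * v (n + 2) - ((n:ℝ)+1) * v (n + 1)) := by
          linear_combination (-1 : ℝ) * h + (-(2*(n:ℝ)+5) * v (n+2)) * ht'
        exact mul_left_cancel₀ h13 hs
      have e1 := gg19_succ (n+1)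
      push_cast at e1
      have e2 := gg19_succ n
      have e3 := sum_rec19 z n
      set S2 := ∑ k ∈ Finset.range (n + 5), cc19 (n+2) k * z ^ k with hS2
      set S1 := ∑ k ∈ Finset.range (n + 4), cc19 (n+1) k * z ^ k with hS1
      set S0 := ∑ k ∈ Finset.range (n + 3), cc19 n k * z ^ k with hS0
      have hstep : (2*(n:ℝ)+3) * (((n:ℝ)+4) * (pre * gg19 (n+2) * t ^ (n+2) * S2))
          = (2*(n:ℝ)+3) * ((2*(n:ℝ)+5) * t * (pre * gg19 (n+1) * t ^ (n+1) * S1)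
              - ((n:ℝ)+1) * (pre * gg19 n * t ^ n * S0)) := by
        linear_combination ((2*(n:ℝ)+3) * pre * t^(n+2) * S2) * e1
          + (pre * gg19 (n+1) * t^(n+2)) * e3
          + (-((n:ℝ)+1) * pre * t^n * S0) * e2
          + (-((n:ℝ)+1) * ((n:ℝ)+3) * pre * gg19 (n+1) * t^n * S0) * htz
      have hcancel : ((n:ℝ)+4) * v (n + 3)
          = ((n:ℝ)+4) * (pre * gg19 (n+2) * t ^ (n+2) * S2) := by
        rw [hv3, ihn1, ihn]
        have := mul_left_cancel₀ (show (2*(n:ℝ)+3) ≠ 0 by positivity) hstep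
        linarith [this]
      exact mul_left_cancel₀ (show ((n:ℝ)+4) ≠ 0 by positivity) hcancel
  exact fun m => (key m).1
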